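/- Let F be a field, m ≥ 2, and N an m × m matrix over F. Let g be the (m+1)-dimensional Lie algebra with basis (e_1, …, e_m, e_{m+1}) and brackets [e_j, e_k] = 0 for 1 ≤ j,k ≤ m and [e_k, e_{m+1}] = Σ_{l=1}^{m} N_{kl} e_l for 1 ≤ k ≤ m. If there exists a vector v in the kernel of N that does not lie in the image (range) of N, then g is decomposable: g is the direct sum of two nonzero ideals. -/

import Mathlib

private lemma sum_Icc_one_eq_sum_fin {β : Type*} [AddCommMonoid β] :
    ∀ (m : ℕ) (g : ℕ → β), ∑ l ∈ Finset.Icc 1 m, g l = ∑ i : Fin m, g (i.val + 1)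
  | 0, _ => by simp
  | (m + 1), g => by
    rw [← Finset.insert_Icc_right_eq_Icc_add_one (by omega), Finset.sum_insert (by simp),
      Fin.sum_univ_castSucc]
    simp only [Fin.coe_castSucc, Fin.val_last]
    rw [← sum_Icc_one_eq_sum_fin m g, add_comm]

/-- Let `g` be the `(m+1)`-dimensional Lie algebra with basis
`(e 1, …, e m, e (m+1))`, brackets `[e j, e k] = 0` for `1 ≤ j,k ≤ m` and
`[e k, e (m+1)] = Σ_{l=1}^m N k l • e l`.  If some row vector `v` lies in the
kernel of `N` (i.e. `Σ_k v k * N k l = 0` for all `l`) but not in its image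
(range of `w ↦ wN`), then `g` is decomposable: it is the direct sum of two
nonzero ideals. -/
theorem abelian_plus_one_decomposable_of_kernel_not_in_image
    (F : Type*) [Field F] (m : ℕ) (hm : 2 ≤ m)
    (L : Type*) [LieRing L] [LieAlgebra F L] (e : ℕ → L) (N : ℕ → ℕ → F)
    (indep : LinearIndependent F (fun i : Fin (m + 1) => e (i.val + 1)))
    (spans : Submodule.span F (Set.range (fun i : Fin (m + 1) => e (i.val + 1))) = ⊤)
    (brkt_ee : ∀ j k : ℕ, 1 ≤ j → j ≤ m → 1 ≤ k → k ≤ m → ⁅e j, e k⁆ = 0)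
    (brkt_eN : ∀ k : ℕ, 1 ≤ k → k ≤ m →
      ⁅e k, e (m + 1)⁆ = ∑ l ∈ Finset.Icc 1 m, N k l • e l)
    (v : ℕ → F)
    (hker : ∀ l : ℕ, 1 ≤ l → l ≤ m → ∑ k ∈ Finset.Icc 1 m, v k * N k l = 0)
    (him : ¬ ∃ w : ℕ → F, ∀ l : ℕ, 1 ≤ l → l ≤ m →
      ∑ k ∈ Finset.Icc 1 m, w k * N k l = v l) :
    ∃ I J : LieIdeal F L, I ≠ ⊥ ∧ J ≠ ⊥ ∧ I ⊓ J = ⊥ ∧ I ⊔ J = ⊤ := by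
  classical
  let b : Module.Basis (Fin (m + 1)) F L := Module.Basis.mk indep (by rw [spans])
  have hb : ∀ i : Fin (m + 1), b i = e (i.val + 1) := fun i => Module.Basis.mk_apply indep _ i
  -- coordinate projection onto the first `m` coordinates
  let ψ : L →ₗ[F] (Fin m → F) := LinearMap.pi fun i => b.coord i.castSucc
  have hψE : ∀ i : Fin m, ψ (e (i.val + 1)) = Pi.single i (1 : F) := by
    intro i
    funext j
    have hbe : e (i.val + 1) = b i.castSucc := by rw [hb]; simp
    simp [ψ, hbe, Module.Basis.coord_apply, Module.Basis.repr_self, Finsupp.single_apply, Pi.single_apply,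
      Fin.castSucc_inj, eq_comm]
  have hψlast : ψ (e (m + 1)) = 0 := by
    funext j
    have hbe : e (m + 1) = b (Fin.last m) := by rw [hb]; simp
    simp [ψ, hbe, Module.Basis.coord_apply, Module.Basis.repr_self, Finsupp.single_apply,
      (Fin.castSucc_lt_last j).ne']
  -- row space of `N`
  set r : Fin m → (Fin m → F) := fun i j => N (i.val + 1) (j.val + 1) with hr
  set v' : Fin m → F := fun i => v (i.val + 1) with hv'
  have hv'W : v' ∉ Submodule.span F (Set.range r) := by
    intro hmem
    rw [Submodule.mem_span_range_iff_exists_fun] at hmem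
    obtain ⟨c, hc⟩ := hmem
    apply him
    refine ⟨fun n => if h : n - 1 < m then c ⟨n - 1, h⟩ else 0, ?_⟩
    intro l hl1 hlm
    set j : Fin m := ⟨l - 1, by omega⟩ with hj
    have hlj : l = j.val + 1 := by simp [hj]; omega
    have h1 : (∑ i, c i • r i) j = v' j := by rw [hc]
    rw [sum_Icc_one_eq_sum_fin]
    have h2 : ∀ i : Fin m, (if h : (i.val + 1) - 1 < m then c ⟨(i.val + 1) - 1, h⟩ else 0)
        * N (i.val + 1) l = c i * r i j := by
      intro i
      have hi : (i.val + 1) - 1 < m := by omega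
      rw [dif_pos hi, hlj]
      congr 1
    rw [Finset.sum_congr rfl fun i _ => h2 i]
    rw [hlj]
    have : v' j = v (j.val + 1) := rfl
    rw [← this, ← h1]
    simp [Finset.sum_apply]
  obtain ⟨f, hfv, hfW⟩ := (Submodule.span F (Set.range r)).exists_dual_map_eq_bot_of_notMem
    hv'W inferInstance
  have hfW' : ∀ x ∈ Submodule.span F (Set.range r), f x = 0 := by
    intro x hx
    have : f x ∈ (Submodule.span F (Set.range r)).map f := Submodule.mem_map_of_mem hx
    rwa [hfW, Submodule.mem_bot] at this
  set φ : L →ₗ[F] F := f ∘ₗ ψ with hφdef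
  have hφE : ∀ i : Fin m, φ (e (i.val + 1)) = f (Pi.single i 1) := by
    intro i; simp [hφdef, hψE]
  have hφlast : φ (e (m + 1)) = 0 := by simp [hφdef, hψlast]
  -- the central element z
  set z : L := ∑ i : Fin m, v' i • e (i.val + 1) with hz
  have hψz : ψ z = v' := by
    funext j
    rw [hz, map_sum]
    simp only [map_smul, hψE]
    simp [Finset.sum_apply, Pi.single_apply]
  have hφz : φ z = f v' := by simp [hφdef, hψz]
  have hv'ne : v' ≠ 0 := by
    intro h0
    apply him
    refine ⟨0, fun l hl1 hlm => ?_⟩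
    have hvl : v l = v' ⟨l - 1, by omega⟩ := by
      simp only [hv']; congr 1; omega
    have : v' (⟨l - 1, by omega⟩ : Fin m) = 0 := by rw [h0]; rfl
    simp [hvl, this]
  have hzne : z ≠ 0 := fun h => hv'ne (by rw [← hψz, h, map_zero])
  -- bracket relations in `Fin` form
  have hEN : ∀ k : Fin m, ⁅e (k.val + 1), e (m + 1)⁆
      = ∑ j : Fin m, N (k.val + 1) (j.val + 1) • e (j.val + 1) := by
    intro k
    rw [brkt_eN (k.val + 1) (by omega) (by omega), sum_Icc_one_eq_sum_fin]
  have hker' : ∀ j : Fin m, ∑ k : Fin m, v' k * N (k.val + 1) (j.val + 1) = 0 := by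
    intro j
    have := hker (j.val + 1) (by omega) (by omega)
    rwa [sum_Icc_one_eq_sum_fin] at this
  -- z is central
  have hcentral : ∀ x : L, ⁅x, z⁆ = 0 := by
    intro x
    have hx : x ∈ Submodule.span F (Set.range fun i : Fin (m + 1) => e (i.val + 1)) := by
      rw [spans]; trivial
    induction hx using Submodule.span_induction with
    | mem x hx =>
      obtain ⟨i, rfl⟩ := hx
      induction i using Fin.lastCases with
      | last =>
        simp only [Fin.val_last]
        rw [hz, ← LieAlgebra.ad_apply (R := F), map_sum]
        simp only [LieAlgebra.ad_apply]
        have h1 : ∀ k : Fin m, ⁅e (m + 1), v' k • e (k.val + 1)⁆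
            = ∑ j : Fin m, -((v' k * N (k.val + 1) (j.val + 1)) • e (j.val + 1)) := by
          intro k
          rw [lie_smul, ← lie_skew, hEN]
          rw [smul_neg, Finset.smul_sum, ← Finset.sum_neg_distrib]
          exact Finset.sum_congr rfl fun j _ => by rw [smul_smul]
        rw [Finset.sum_congr rfl fun k _ => h1 k, Finset.sum_comm]
        have h2 : ∀ j : Fin m, ∑ k : Fin m, -((v' k * N (k.val + 1) (j.val + 1)) • e (j.val + 1))
            = 0 := by
          intro j
          rw [Finset.sum_neg_distrib, ← Finset.sum_smul, hker', zero_smul, neg_zero]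
        rw [Finset.sum_congr rfl fun j _ => h2 j, Finset.sum_const_zero]
      | cast i =>
        simp only [Fin.coe_castSucc]
        rw [hz, ← LieAlgebra.ad_apply (R := F), map_sum]
        simp only [LieAlgebra.ad_apply]
        have h1 : ∀ k : Fin m, ⁅e (i.val + 1), v' k • e (k.val + 1)⁆ = 0 := by
          intro k
          rw [lie_smul, brkt_ee (i.val + 1) (k.val + 1) (by omega) (by omega) (by omega)
            (by omega), smul_zero]
        rw [Finset.sum_congr rfl fun k _ => h1 k, Finset.sum_const_zero]
    | zero => rw [zero_lie]
    | add x y _ _ hx hy => rw [add_lie, hx, hy, add_zero]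
    | smul c x _ hx => rw [smul_lie, hx, smul_zero]
  -- φ kills all brackets
  have hφrow : ∀ k : Fin m, φ ⁅e (k.val + 1), e (m + 1)⁆ = 0 := by
    intro k
    rw [hEN k, map_sum]
    have h1 : ∀ j : Fin m, φ (N (k.val + 1) (j.val + 1) • e (j.val + 1))
        = f (N (k.val + 1) (j.val + 1) • (Pi.single j 1 : Fin m → F)) := by
      intro j
      rw [map_smul, hφE, map_smul]
    rw [Finset.sum_congr rfl fun j _ => h1 j, ← map_sum]
    have h2 : (∑ j : Fin m, N (k.val + 1) (j.val + 1) • (Pi.single j 1 : Fin m → F)) = r k := by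
      funext l
      simp [Finset.sum_apply, Pi.single_apply, hr]
    rw [h2]
    exact hfW' _ (Submodule.subset_span ⟨k, rfl⟩)
  have hbrkt : ∀ x y : L, φ ⁅x, y⁆ = 0 := by
    have hB : LinearMap.compr₂ ((LieAlgebra.ad F L) : L →ₗ[F] Module.End F L) φ = 0 := by
      apply LinearMap.ext_on spans
      rintro x ⟨i, rfl⟩
      apply LinearMap.ext_on spans
      rintro y ⟨k, rfl⟩
      simp only [LinearMap.compr₂_apply, LieHom.coe_toLinearMap, LieAlgebra.ad_apply,
        LinearMap.zero_apply]
      induction i using Fin.lastCases with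
      | last =>
        induction k using Fin.lastCases with
        | last => simp only [Fin.val_last]; rw [lie_self, map_zero]
        | cast k =>
          simp only [Fin.val_last, Fin.coe_castSucc]
          rw [← lie_skew, map_neg, hφrow, neg_zero]
      | cast i =>
        induction k using Fin.lastCases with
        | last => simp only [Fin.coe_castSucc, Fin.val_last]; exact hφrow i
        | cast k =>
          simp only [Fin.coe_castSucc]
          rw [brkt_ee (i.val + 1) (k.val + 1) (by omega) (by omega) (by omega) (by omega),
            map_zero]
    intro x y
    have := LinearMap.congr_fun (LinearMap.congr_fun hB x) y
    simpa [LinearMap.compr₂_apply, LieAlgebra.ad_apply] using this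
  -- the two ideals
  let I : LieIdeal F L :=
    { Submodule.span F {z} with
      lie_mem := by
        intro x y hy
        obtain ⟨c, rfl⟩ := Submodule.mem_span_singleton.mp hy
        have : ⁅x, c • z⁆ = 0 := by rw [lie_smul, hcentral, smul_zero]
        rw [this]
        exact Submodule.zero_mem _ }
  let J : LieIdeal F L :=
    { LinearMap.ker φ with
      lie_mem := fun {x y} _ => LinearMap.mem_ker.mpr (hbrkt x y) }
  have hIz : z ∈ I := Submodule.mem_span_singleton_self z
  have hJlast : e (m + 1) ∈ J := LinearMap.mem_ker.mpr hφlast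
  refine ⟨I, J, ?_, ?_, ?_, ?_⟩
  · intro h
    rw [h] at hIz
    exact hzne ((LieSubmodule.mem_bot _).mp hIz)
  · intro h
    rw [h] at hJlast
    have := (LieSubmodule.mem_bot _).mp hJlast
    have hbl : b (Fin.last m) ≠ 0 := b.ne_zero _
    rw [hb] at hbl
    simp only [Fin.val_last] at hbl
    exact hbl this
  · rw [← LieSubmodule.toSubmodule_inj, LieSubmodule.inf_toSubmodule,
      LieSubmodule.bot_toSubmodule]
    rw [eq_bot_iff]
    rintro x ⟨hx1, hx2⟩
    obtain ⟨c, rfl⟩ := Submodule.mem_span_singleton.mp hx1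
    have : φ (c • z) = 0 := hx2
    rw [map_smul, hφz, smul_eq_mul] at this
    have hc : c = 0 := by
      rcases mul_eq_zero.mp this with h | h
      · exact h
      · exact absurd h hfv
    rw [hc, zero_smul]
    exact Submodule.zero_mem _
  · rw [← LieSubmodule.toSubmodule_inj, LieSubmodule.sup_toSubmodule,
      LieSubmodule.top_toSubmodule]
    rw [eq_top_iff]
    intro x _
    set c : F := φ x * (f v')⁻¹ with hc
    refine Submodule.mem_sup.mpr ⟨c • z, Submodule.mem_span_singleton.mpr ⟨c, rfl⟩,
      x - c • z, ?_, by abel⟩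
    show x - c • z ∈ LinearMap.ker φ
    rw [LinearMap.mem_ker, map_sub, map_smul, hφz, smul_eq_mul, hc]
    field_simp
    ring
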